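/- arXiv:0705.1646 — 2 statements merged into one kernel-verified Lean document; each statement's English description precedes it below -/
import Mathlib

section
/- Let ℓ ≥ 2 and let q ≥ 2 be a real number. Let λ = (λ_1,…,λ_k) be a composition of ℓ, and set m_i = λ_1+⋯+λ_{i−1}+1 and n_i = λ_1+⋯+λ_i for 1 ≤ i ≤ k. Let w : ℝ^ℓ → ℝ^ℓ be the linear map determined by w(e_j) = e_{j+1} for m_i ≤ j ≤ n_i−1 and w(e_{n_i}) = e_{m_i}, for each 1 ≤ i ≤ k (so w is the product of the disjoint cycles on the consecutive blocks [m_i, n_i]). Then there exists x = (x_1,…,x_ℓ) ∈ ℝ^ℓ with x_1 > x_2 > ⋯ > x_ℓ > 0 such that ⟨qx − wx, e_i − e_{i+1}⟩ > 0 for all 1 ≤ i ≤ ℓ−1. -/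
open scoped RealInnerProductSpace

/-- The standard basis vector `e_j` (1-based) of `ℝ^ℓ`; zero for out-of-range indices. -/
noncomputable def E (ℓ : ℕ) (j : ℕ) : EuclideanSpace ℝ (Fin ℓ) :=
  if h : 1 ≤ j ∧ j ≤ ℓ then EuclideanSpace.single (⟨j - 1, by omega⟩ : Fin ℓ) (1 : ℝ) else 0

/-- The vector `(x_1, …, x_ℓ) ∈ ℝ^ℓ` built from a (1-based) sequence of reals. -/
noncomputable def vec (ℓ : ℕ) (x : ℕ → ℝ) : EuclideanSpace ℝ (Fin ℓ) :=
  WithLp.toLp 2 (fun i : Fin ℓ => x (i.1 + 1))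

lemma inner_E_E (ℓ a b : ℕ) (ha1 : 1 ≤ a) (ha2 : a ≤ ℓ) (hb1 : 1 ≤ b) (hb2 : b ≤ ℓ) :
    (⟪E ℓ a, E ℓ b⟫ : ℝ) = if a = b then 1 else 0 := by
  rw [E, E, dif_pos ⟨ha1, ha2⟩, dif_pos ⟨hb1, hb2⟩, EuclideanSpace.inner_single_left]
  simp only [EuclideanSpace.single_apply, map_one, one_mul]
  rcases eq_or_ne a b with h | h
  · subst h; simp
  · have hf : (⟨a - 1, by omega⟩ : Fin ℓ) ≠ ⟨b - 1, by omega⟩ := by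
      simp [Fin.ext_iff]; omega
    rw [if_neg hf, if_neg h]

lemma inner_vec_E (ℓ a : ℕ) (x : ℕ → ℝ) (ha1 : 1 ≤ a) (ha2 : a ≤ ℓ) :
    (⟪vec ℓ x, E ℓ a⟫ : ℝ) = x a := by
  rw [E, dif_pos ⟨ha1, ha2⟩, EuclideanSpace.inner_single_right]
  simp only [conj_trivial, mul_one]
  rw [one_mul]
  show x (a - 1 + 1) = x a
  congr 1; omega

lemma vec_eq_sum (ℓ : ℕ) (x : ℕ → ℝ) :
    vec ℓ x = ∑ j ∈ Finset.Icc 1 ℓ, x j • E ℓ j := by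
  ext p
  have hmem : p.1 + 1 ∈ Finset.Icc 1 ℓ := by
    simp only [Finset.mem_Icc]; omega
  rw [show (∑ j ∈ Finset.Icc 1 ℓ, x j • E ℓ j) p
        = ∑ j ∈ Finset.Icc 1 ℓ, (x j • E ℓ j) p by rw [WithLp.ofLp_sum]; exact Finset.sum_apply _ _ _,
      Finset.sum_eq_single_of_mem (p.1+1) hmem ?_]
  · show x (p.1+1) = x (p.1+1) • (E ℓ (p.1+1)) p
    rw [E, dif_pos (by constructor <;> omega)]
    have h : (⟨p.1 + 1 - 1, by omega⟩ : Fin ℓ) = p := by ext; simp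
    rw [h]
    simp [EuclideanSpace.single_apply]
  · intro j hj hne
    rw [Finset.mem_Icc] at hj
    show x j • (E ℓ j) p = 0
    rw [E, dif_pos ⟨hj.1, hj.2⟩]
    have h : p ≠ (⟨j - 1, by omega⟩ : Fin ℓ) := by
      intro h; rw [Fin.ext_iff] at h; simp at h; omega
    simp [EuclideanSpace.single_apply, h]

def Sf (lam : ℕ → ℕ) (i : ℕ) : ℕ := ∑ t ∈ Finset.Icc 1 i, lam t

lemma Sf_zero (lam : ℕ → ℕ) : Sf lam 0 = 0 := by simp [Sf]

lemma Sf_succ (lam : ℕ → ℕ) (i : ℕ) : Sf lam (i+1) = Sf lam i + lam (i+1) := by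
  rw [Sf, Sf, Finset.sum_Icc_succ_top (by omega)]

lemma Sf_mono (lam : ℕ → ℕ) : Monotone (Sf lam) := by
  intro a b hab
  exact Finset.sum_le_sum_of_subset (Finset.Icc_subset_Icc_right hab)

open Classical in
noncomputable def blk (lam : ℕ → ℕ) (j : ℕ) : ℕ :=
  if h : ∃ i, j ≤ Sf lam i then Nat.find h else 0

lemma blk_le (lam : ℕ → ℕ) (j b : ℕ) (hb : j ≤ Sf lam b) : blk lam j ≤ b := by
  rw [blk, dif_pos ⟨b, hb⟩]
  exact Nat.find_min' _ hb

lemma blk_spec (lam : ℕ → ℕ) (j b : ℕ) (hb : j ≤ Sf lam b) : j ≤ Sf lam (blk lam j) := by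
  rw [blk, dif_pos ⟨b, hb⟩]
  exact Nat.find_spec (⟨b, hb⟩ : ∃ i, j ≤ Sf lam i)

lemma blk_pos (lam : ℕ → ℕ) (j b : ℕ) (hj : 1 ≤ j) (hb : j ≤ Sf lam b) : 1 ≤ blk lam j := by
  by_contra h
  have h0 : blk lam j = 0 := by omega
  have := blk_spec lam j b hb
  rw [h0, Sf_zero] at this
  omega

lemma blk_pred_lt (lam : ℕ → ℕ) (j b : ℕ) (hj : 1 ≤ j) (hb : j ≤ Sf lam b) :
    Sf lam (blk lam j - 1) < j := by
  have h1 := blk_pos lam j b hj hb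
  by_contra h
  have := blk_le lam j (blk lam j - 1) (by omega)
  omega

lemma blk_eq (lam : ℕ → ℕ) (j b : ℕ) (hb1 : 1 ≤ b) (h1 : Sf lam (b-1) < j) (h2 : j ≤ Sf lam b) :
    blk lam j = b := by
  have hle := blk_le lam j b h2
  have hsp := blk_spec lam j b h2
  by_contra h
  have hle' : blk lam j ≤ b - 1 := by omega
  have := Sf_mono lam hle'
  omega

/-- For a composition `λ` of `ℓ` and the product `w = w_λ` of the disjoint
cycles on the consecutive blocks `[m_i, n_i]`, there exists `x_1 > ⋯ > x_ℓ > 0` with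
`⟨qx - wx, e_i - e_{i+1}⟩ > 0` for all `1 ≤ i ≤ ℓ-1`. -/
theorem stmt_5 (ℓ : ℕ) (hℓ : 2 ≤ ℓ) (q : ℝ) (hq : 2 ≤ q)
    (k : ℕ) (hk : 1 ≤ k) (lam : ℕ → ℕ)
    (hlam : ∀ i, 1 ≤ i → i ≤ k → 1 ≤ lam i)
    (hsum : ∑ j ∈ Finset.Icc 1 k, lam j = ℓ)
    (w : EuclideanSpace ℝ (Fin ℓ) →ₗ[ℝ] EuclideanSpace ℝ (Fin ℓ))
    (hw : ∀ i, 1 ≤ i → i ≤ k →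
      (∀ j, (∑ t ∈ Finset.Icc 1 (i - 1), lam t) + 1 ≤ j →
          j + 1 ≤ ∑ t ∈ Finset.Icc 1 i, lam t → w (E ℓ j) = E ℓ (j + 1)) ∧
      w (E ℓ (∑ t ∈ Finset.Icc 1 i, lam t))
        = E ℓ ((∑ t ∈ Finset.Icc 1 (i - 1), lam t) + 1)) :
    ∃ x : ℕ → ℝ,
      (∀ j, 1 ≤ j → j < ℓ → x (j + 1) < x j) ∧ 0 < x ℓ ∧
      (∀ i, 1 ≤ i → i + 1 ≤ ℓ →
        0 < ⟪q • vec ℓ x - w (vec ℓ x), E ℓ i - E ℓ (i + 1)⟫) := by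
  have hSdef : ∀ i, (∑ t ∈ Finset.Icc 1 i, lam t) = Sf lam i := fun i => rfl
  simp only [hSdef] at hw hsum
  -- basic facts
  have hSstep : ∀ b, 1 ≤ b → b ≤ k → Sf lam (b-1) + 1 ≤ Sf lam b := by
    intro b hb1 hb2
    have h1 : Sf lam ((b-1)+1) = Sf lam (b-1) + lam ((b-1)+1) := Sf_succ lam (b-1)
    rw [show b-1+1 = b by omega] at h1
    have := hlam b hb1 hb2
    omega
  have hblk : ∀ j, 1 ≤ j → j ≤ ℓ →
      1 ≤ blk lam j ∧ blk lam j ≤ k ∧ Sf lam (blk lam j - 1) < j ∧ j ≤ Sf lam (blk lam j) := by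
    intro j h1 h2
    have hb : j ≤ Sf lam k := by omega
    exact ⟨blk_pos lam j k h1 hb, blk_le lam j k hb, blk_pred_lt lam j k h1 hb,
      blk_spec lam j k hb⟩
  -- the permutation on indices and its inverse
  set σf : ℕ → ℕ := fun j =>
    if j = Sf lam (blk lam j) then Sf lam (blk lam j - 1) + 1 else j + 1 with hσf
  set τf : ℕ → ℕ := fun i =>
    if i = Sf lam (blk lam i - 1) + 1 then Sf lam (blk lam i) else i - 1 with hτf
  have hτrange : ∀ i, 1 ≤ i → i ≤ ℓ → 1 ≤ τf i ∧ τf i ≤ ℓ := by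
    intro i h1 h2
    obtain ⟨hb1, hb2, hb3, hb4⟩ := hblk i h1 h2
    rw [hτf]
    simp only
    split_ifs with h
    · have := Sf_mono lam hb2
      omega
    · omega
  have hσrange : ∀ j, 1 ≤ j → j ≤ ℓ → 1 ≤ σf j ∧ σf j ≤ ℓ := by
    intro j h1 h2
    obtain ⟨hb1, hb2, hb3, hb4⟩ := hblk j h1 h2
    rw [hσf]
    simp only
    split_ifs with h
    · omega
    · have hne : j + 1 ≤ Sf lam (blk lam j) := by omega
      have := Sf_mono lam hb2
      omega
  have hστ : ∀ i, 1 ≤ i → i ≤ ℓ → σf (τf i) = i := by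
    intro i h1 h2
    obtain ⟨hb1, hb2, hb3, hb4⟩ := hblk i h1 h2
    by_cases hst : i = Sf lam (blk lam i - 1) + 1
    · have hτi : τf i = Sf lam (blk lam i) := by rw [hτf]; simp only; rw [if_pos hst]
      have hblkτ : blk lam (Sf lam (blk lam i)) = blk lam i :=
        blk_eq lam _ _ hb1 (by omega) le_rfl
      rw [hτi, hσf]
      simp only
      rw [hblkτ, if_pos rfl]
      omega
    · have hτi : τf i = i - 1 := by rw [hτf]; simp only; rw [if_neg hst]
      have hblkτ : blk lam (i-1) = blk lam i := blk_eq lam _ _ hb1 (by omega) (by omega)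
      rw [hτi, hσf]
      simp only
      rw [hblkτ, if_neg (by omega)]
      omega
  have hinj : ∀ i j, 1 ≤ i → i ≤ ℓ → 1 ≤ j → j ≤ ℓ → σf j = i → j = τf i := by
    intro i j hi1 hi2 hj1 hj2 hσji
    obtain ⟨hb1, hb2, hb3, hb4⟩ := hblk j hj1 hj2
    rw [hσf] at hσji
    simp only at hσji
    by_cases hend : j = Sf lam (blk lam j)
    · rw [if_pos hend] at hσji
      have hblki : blk lam i = blk lam j := by
        apply blk_eq lam _ _ hb1 (by omega) (by omega)
      rw [hτf]; simp only
      rw [hblki, if_pos (by omega)]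
      omega
    · rw [if_neg hend] at hσji
      have hblki : blk lam i = blk lam j := by
        apply blk_eq lam _ _ hb1 (by omega) (by omega)
      rw [hτf]; simp only
      rw [hblki, if_neg (by omega)]
      omega
  -- w on basis vectors
  have hwE : ∀ j, 1 ≤ j → j ≤ ℓ → w (E ℓ j) = E ℓ (σf j) := by
    intro j h1 h2
    obtain ⟨hb1, hb2, hb3, hb4⟩ := hblk j h1 h2
    obtain ⟨hA, hB⟩ := hw (blk lam j) hb1 hb2
    rw [hσf]; simp only
    by_cases hend : j = Sf lam (blk lam j)
    · rw [if_pos hend]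
      conv_lhs => rw [hend]
      exact hB
    · rw [if_neg hend]
      exact hA j (by omega) (by omega)
  -- the vector x
  set r : ℝ := 2 / (q + 1) with hrdef
  have hr0 : 0 < r := by rw [hrdef]; positivity
  have hr1 : r < 1 := by
    rw [hrdef, div_lt_one (by linarith)]; linarith
  have hqr : 1 < q * r := by
    rw [hrdef, show q * (2 / (q + 1)) = 2 * q / (q + 1) by ring,
      lt_div_iff₀ (by linarith : (0:ℝ) < q + 1)]
    linarith
  set x : ℕ → ℝ := fun j => ((k : ℝ) - (blk lam j : ℝ)) + r ^ j / 2 with hxdef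
  have ex : ∀ j, x j = ((k : ℝ) - (blk lam j : ℝ)) + r ^ j / 2 := fun j => rfl
  -- inner products
  have hinner_w : ∀ i, 1 ≤ i → i ≤ ℓ → (⟪w (vec ℓ x), E ℓ i⟫ : ℝ) = x (τf i) := by
    intro i h1 h2
    obtain ⟨hτ1, hτ2⟩ := hτrange i h1 h2
    rw [vec_eq_sum, map_sum, sum_inner,
      Finset.sum_eq_single_of_mem (τf i) (by simp only [Finset.mem_Icc]; omega) ?_]
    · rw [map_smul, real_inner_smul_left, hwE (τf i) hτ1 hτ2, hστ i h1 h2,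
        inner_E_E ℓ i i h1 h2 h1 h2, if_pos rfl, mul_one]
    · intro j hj hne
      rw [Finset.mem_Icc] at hj
      rw [map_smul, real_inner_smul_left, hwE j hj.1 hj.2]
      obtain ⟨hs1, hs2⟩ := hσrange j hj.1 hj.2
      rw [inner_E_E ℓ (σf j) i hs1 hs2 h1 h2, if_neg, mul_zero]
      intro hc
      exact hne (hinj i j h1 h2 hj.1 hj.2 hc)
  have hkey : ∀ i, 1 ≤ i → i + 1 ≤ ℓ →
      (⟪q • vec ℓ x - w (vec ℓ x), E ℓ i - E ℓ (i+1)⟫ : ℝ)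
        = q * x i - q * x (i+1) - x (τf i) + x (τf (i+1)) := by
    intro i h1 h2
    rw [inner_sub_left, inner_sub_right, inner_sub_right, real_inner_smul_left,
      real_inner_smul_left, inner_vec_E ℓ i x h1 (by omega),
      inner_vec_E ℓ (i+1) x (by omega) h2, hinner_w i h1 (by omega),
      hinner_w (i+1) (by omega) h2]
    ring
  refine ⟨x, ?_, ?_, ?_⟩
  · -- monotonicity
    intro j h1 h2
    have hble : blk lam j ≤ blk lam (j+1) := by
      apply blk_le
      have := (hblk (j+1) (by omega) (by omega)).2.2.2
      omega
    have hpow : r ^ (j+1) < r ^ j := by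
      apply pow_lt_pow_right_of_lt_one₀ hr0 hr1
      omega
    have hcast : (blk lam j : ℝ) ≤ (blk lam (j+1) : ℝ) := by exact_mod_cast hble
    rw [ex, ex]
    linarith
  · -- positivity at ℓ
    have hbl : blk lam ℓ = k := by
      apply blk_eq lam ℓ k hk
      · have := hSstep k hk le_rfl; omega
      · omega
    rw [ex, hbl]
    have : 0 < r ^ ℓ := pow_pos hr0 ℓ
    simp only [sub_self]
    linarith
  · -- main inequality
    intro i h1 h2
    rw [hkey i h1 h2]
    obtain ⟨hb1, hb2, hb3, hb4⟩ := hblk i h1 (by omega)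
    set b := blk lam i with hbdef
    by_cases hend : i = Sf lam b
    · -- i is a block end
      have hbk : b < k := by
        rcases eq_or_lt_of_le hb2 with h | h
        · exfalso; rw [h] at hend; omega
        · exact h
      have hSb1 : Sf lam b + 1 ≤ Sf lam (b+1) := by
        have := hSstep (b+1) (by omega) (by omega)
        rw [show b+1-1 = b by omega] at this
        omega
      have hblk1 : blk lam (i+1) = b + 1 := by
        apply blk_eq lam _ _ (by omega)
        · rw [show b+1-1 = b by omega]; omega
        · omega
      have hnl : Sf lam (b+1) ≤ ℓ := by
        have := Sf_mono lam (show b+1 ≤ k by omega)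
        omega
      have hτ1 : τf (i+1) = Sf lam (b+1) := by
        rw [hτf]; simp only
        rw [hblk1, if_pos (by rw [show b+1-1 = b by omega]; omega)]
      have hblkn : blk lam (Sf lam (b+1)) = b + 1 := by
        apply blk_eq lam _ _ (by omega)
        · rw [show b+1-1 = b by omega]; omega
        · exact le_rfl
      -- bound on x (τf i)
      have hxτ : x (τf i) ≤ (k : ℝ) - (b : ℝ) + 1/2 := by
        have hblkτ : blk lam (τf i) = b := by
          by_cases hst : i = Sf lam (b - 1) + 1
          · have : τf i = Sf lam b := by rw [hτf]; simp only; rw [← hbdef, if_pos hst]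
            rw [this, ← hend, ← hbdef]
          · have : τf i = i - 1 := by rw [hτf]; simp only; rw [← hbdef, if_neg hst]
            rw [this]
            exact blk_eq lam _ _ hb1 (by omega) (by omega)
        rw [ex, hblkτ]
        have : r ^ (τf i) ≤ 1 := pow_le_one₀ hr0.le hr1.le
        linarith
      rw [hτ1, ex i, ex (i+1), ex (Sf lam (b+1)), hblk1, hblkn, ← hbdef]
      push_cast
      have hp1 : r ^ (i+1) ≤ r ^ i := pow_le_pow_of_le_one hr0.le hr1.le (by omega)
      have hp2 : 0 < r ^ (Sf lam (b+1)) := pow_pos hr0 _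
      nlinarith [mul_nonneg (by linarith : (0:ℝ) ≤ q) (by linarith : (0:ℝ) ≤ r ^ i - r ^ (i+1))]
    · -- i is not a block end
      have hilt : i < Sf lam b := by omega
      have hblk1 : blk lam (i+1) = b := blk_eq lam _ _ hb1 (by omega) (by omega)
      have hτ1 : τf (i+1) = i := by
        rw [hτf]; simp only
        rw [hblk1, if_neg (by omega)]
        omega
      have hp1 : r ^ (i+1) < r ^ i := pow_lt_pow_right_of_lt_one₀ hr0 hr1 (by omega)
      by_cases hst : i = Sf lam (b - 1) + 1
      · -- block start
        have hτ0 : τf i = Sf lam b := by rw [hτf]; simp only; rw [← hbdef, if_pos hst]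
        have hblkS : blk lam (Sf lam b) = b := blk_eq lam _ _ hb1 (by omega) le_rfl
        rw [hτ1, hτ0, ex i, ex (i+1), ex (Sf lam b), hblk1, hblkS, ← hbdef]
        have hp2 : r ^ (Sf lam b) ≤ r ^ i := pow_le_pow_of_le_one hr0.le hr1.le (by omega)
        nlinarith [mul_pos (by linarith : (0:ℝ) < q) (by linarith : (0:ℝ) < r ^ i - r ^ (i+1))]
      · -- interior
        have hτ0 : τf i = i - 1 := by rw [hτf]; simp only; rw [← hbdef, if_neg hst]
        have hblkm : blk lam (i-1) = b := blk_eq lam _ _ hb1 (by omega) (by omega)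
        rw [hτ1, hτ0, ex i, ex (i+1), ex (i-1), hblk1, hblkm, ← hbdef]
        have ht : 0 < r ^ (i-1) := pow_pos hr0 _
        have hi : r ^ i = r ^ (i-1) * r := by
          rw [← pow_succ]; congr 1; omega
        have hi1 : r ^ (i+1) = r ^ (i-1) * r * r := by
          rw [← pow_succ, ← pow_succ]; congr 1; omega
        rw [hi, hi1]
        nlinarith [mul_pos (mul_pos ht (by linarith : (0:ℝ) < 1 - r))
          (by linarith : (0:ℝ) < q * r - 1)]
end

section
/- Let ℓ ≥ 2 and let q ≥ 2 be a real number. Let λ = (λ_1,…,λ_k) be a composition of ℓ, set m_i = λ_1+⋯+λ_{i−1}+1 and n_i = λ_1+⋯+λ_i, and let w : ℝ^ℓ → ℝ^ℓ be the linear map with w(e_j) = e_{j+1} for m_i ≤ j ≤ n_i−1 and w(e_{n_i}) = e_{m_i} for each 1 ≤ i ≤ k. Then there exists x = (x_1,…,x_ℓ) ∈ ℝ^ℓ with x_1 > x_2 > ⋯ > x_ℓ and x_1 + x_2 + ⋯ + x_ℓ = 0 (i.e., x lies in the open Weyl chamber of type A_{ℓ−1}) such that ⟨qx − wx, e_i −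 e_{i+1}⟩ > 0 for all 1 ≤ i ≤ ℓ−1. -/
open scoped RealInnerProductSpace

lemma E_inner {ℓ a b : ℕ} (ha1 : 1 ≤ a) (ha2 : a ≤ ℓ) (hb1 : 1 ≤ b) (hb2 : b ≤ ℓ) :
    ⟪E ℓ a, E ℓ b⟫ = if a = b then (1:ℝ) else 0 := by
  rw [E, E, dif_pos ⟨ha1, ha2⟩, dif_pos ⟨hb1, hb2⟩, EuclideanSpace.inner_single_left]
  simp only [map_one, one_mul, EuclideanSpace.single_apply]
  by_cases h : a = b
  · simp [h]
  · rw [if_neg h, if_neg]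
    intro hc
    apply h
    have := Fin.mk.inj_iff.mp hc
    omega

lemma inner_vec_E_s6 {ℓ i : ℕ} (x : ℕ → ℝ) (hi1 : 1 ≤ i) (hi2 : i ≤ ℓ) :
    ⟪vec ℓ x, E ℓ i⟫ = x i := by
  rw [E, dif_pos ⟨hi1, hi2⟩, EuclideanSpace.inner_single_right]
  simp only [map_one, one_mul, RCLike.star_def]
  show starRingEnd ℝ (x (i - 1 + 1)) = x i
  rw [Nat.sub_add_cancel hi1]
  simp

/-- For a composition `λ` of `ℓ` and the product `w = w_λ` of the disjoint
cycles on the consecutive blocks `[m_i, n_i]`, there exists `x` in the open Weyl chamber of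
type `A_{ℓ-1}` (i.e. `x_1 > ⋯ > x_ℓ` and `Σ_j x_j = 0`) with `⟨qx - wx, e_i - e_{i+1}⟩ > 0`
for all `1 ≤ i ≤ ℓ-1`. -/
theorem stmt_6 (ℓ : ℕ) (hℓ : 2 ≤ ℓ) (q : ℝ) (hq : 2 ≤ q)
    (k : ℕ) (hk : 1 ≤ k) (lam : ℕ → ℕ)
    (hlam : ∀ i, 1 ≤ i → i ≤ k → 1 ≤ lam i)
    (hsum : ∑ j ∈ Finset.Icc 1 k, lam j = ℓ)
    (w : EuclideanSpace ℝ (Fin ℓ) →ₗ[ℝ] EuclideanSpace ℝ (Fin ℓ))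
    (hw : ∀ i, 1 ≤ i → i ≤ k →
      (∀ j, (∑ t ∈ Finset.Icc 1 (i - 1), lam t) + 1 ≤ j →
          j + 1 ≤ ∑ t ∈ Finset.Icc 1 i, lam t → w (E ℓ j) = E ℓ (j + 1)) ∧
      w (E ℓ (∑ t ∈ Finset.Icc 1 i, lam t))
        = E ℓ ((∑ t ∈ Finset.Icc 1 (i - 1), lam t) + 1)) :
    ∃ x : ℕ → ℝ,
      (∀ j, 1 ≤ j → j < ℓ → x (j + 1) < x j) ∧
      (∑ j ∈ Finset.Icc 1 ℓ, x j = 0) ∧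
      (∀ i, 1 ≤ i → i + 1 ≤ ℓ →
        0 < ⟪q • vec ℓ x - w (vec ℓ x), E ℓ i - E ℓ (i + 1)⟫) := by
  classical
  set N : ℕ → ℕ := fun i => ∑ t ∈ Finset.Icc 1 i, lam t with hNdef
  have hw' : ∀ i, 1 ≤ i → i ≤ k →
      (∀ j, N (i-1) + 1 ≤ j → j + 1 ≤ N i → w (E ℓ j) = E ℓ (j + 1)) ∧
      w (E ℓ (N i)) = E ℓ (N (i-1) + 1) := hw
  have hN0 : N 0 = 0 := by simp [hNdef]
  have hNk : N k = ℓ := hsum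
  have hNmono : ∀ {a b : ℕ}, a ≤ b → N a ≤ N b := by
    intro a b hab
    exact Finset.sum_le_sum_of_subset (Finset.Icc_subset_Icc le_rfl hab)
  have hNsucc : ∀ i, 1 ≤ i → N i = N (i-1) + lam i := by
    intro i hi
    obtain ⟨m, rfl⟩ : ∃ m, i = m + 1 := ⟨i-1, by omega⟩
    show (∑ t ∈ Finset.Icc 1 (m+1), lam t) = _
    rw [Finset.sum_Icc_succ_top (by omega)]
    simp [hNdef]
  have hNlt : ∀ i, 1 ≤ i → i ≤ k → N (i-1) < N i := by
    intro i h1 h2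
    have := hNsucc i h1
    have := hlam i h1 h2
    omega
  -- block index
  have hex : ∀ j, j ≤ ℓ → ∃ i, j ≤ N i := fun j hj => ⟨k, by rw [hNk]; exact hj⟩
  set bIdx : ℕ → ℕ := fun j => if h : ∃ i, j ≤ N i then Nat.find h else 0 with hbdef
  have hb_spec : ∀ j, 1 ≤ j → j ≤ ℓ →
      1 ≤ bIdx j ∧ bIdx j ≤ k ∧ N (bIdx j - 1) < j ∧ j ≤ N (bIdx j) := by
    intro j hj1 hj2
    have h := hex j hj2
    have hb : bIdx j = Nat.find h := by simp [hbdef, dif_pos h]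
    have hspec : j ≤ N (bIdx j) := by rw [hb]; exact Nat.find_spec h
    have hble : bIdx j ≤ k := by rw [hb]; exact Nat.find_le (by rw [hNk]; exact hj2)
    have hb1 : 1 ≤ bIdx j := by
      by_contra hc
      have : bIdx j = 0 := by omega
      rw [this, hN0] at hspec; omega
    refine ⟨hb1, hble, ?_, hspec⟩
    have := Nat.find_min h (show bIdx j - 1 < Nat.find h by omega)
    omega
  have hb_eq : ∀ j b, 1 ≤ b → b ≤ k → N (b-1) < j → j ≤ N b → bIdx j = b := by
    intro j b hb1 hbk hlt hle
    have hj1 : 1 ≤ j := by omega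
    have hj2 : j ≤ ℓ := le_trans hle (by rw [← hNk]; exact hNmono hbk)
    obtain ⟨h1, h2, h3, h4⟩ := hb_spec j hj1 hj2
    by_contra hne
    rcases Nat.lt_or_ge (bIdx j) b with hc | hc
    · have : N (bIdx j) ≤ N (b-1) := hNmono (by omega)
      omega
    · have : N b ≤ N (bIdx j - 1) := hNmono (by omega)
      omega
  set B : Finset ℕ := (Finset.Icc 1 k).image N with hBdef
  have hB_of : ∀ b, 1 ≤ b → b ≤ k → N b ∈ B := by
    intro b h1 h2
    exact Finset.mem_image.mpr ⟨b, Finset.mem_Icc.mpr ⟨h1, h2⟩, rfl⟩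
  have hBmem : ∀ j, 1 ≤ j → j ≤ ℓ → (j ∈ B ↔ j = N (bIdx j)) := by
    intro j hj1 hj2
    constructor
    · intro hjB
      obtain ⟨t, ht, hteq⟩ := Finset.mem_image.mp hjB
      have ht' := Finset.mem_Icc.mp ht
      obtain ⟨h1, h2, h3, h4⟩ := hb_spec j hj1 hj2
      have hle : bIdx j ≤ t := by
        by_contra hc
        have : N t ≤ N (bIdx j - 1) := hNmono (by omega)
        omega
      have : N (bIdx j) ≤ N t := hNmono hle
      omega
    · intro hj
      rw [hj]
      obtain ⟨h1, h2, _, _⟩ := hb_spec j hj1 hj2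
      exact hB_of _ h1 h2
  have hnotB : ∀ t b, 1 ≤ b → b ≤ k → N (b-1) < t → t < N b → t ∉ B := by
    intro t b h1 h2 h3 h4 htB
    have ht1 : 1 ≤ t := by omega
    have ht2 : t ≤ ℓ := by
      have : N b ≤ ℓ := by rw [← hNk]; exact hNmono h2
      omega
    have heq := (hBmem t ht1 ht2).mp htB
    rw [hb_eq t b h1 h2 h3 (le_of_lt h4)] at heq
    omega
  -- action of w on basis vectors
  have hwE1 : ∀ j, 1 ≤ j → j ≤ ℓ → j ≠ N (bIdx j) → w (E ℓ j) = E ℓ (j+1) := by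
    intro j h1 h2 hne
    obtain ⟨hb1, hb2, hb3, hb4⟩ := hb_spec j h1 h2
    exact (hw' (bIdx j) hb1 hb2).1 j (by omega) (by omega)
  have hwE2 : ∀ j, 1 ≤ j → j ≤ ℓ → j = N (bIdx j) →
      w (E ℓ j) = E ℓ (N (bIdx j - 1) + 1) := by
    intro j h1 h2 heq
    obtain ⟨hb1, hb2, hb3, hb4⟩ := hb_spec j h1 h2
    have h := (hw' (bIdx j) hb1 hb2).2
    rw [← heq] at h
    exact h
  -- the vector x
  set ε : ℝ := 1 / (2 * ℓ) with hεdef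
  have hℓ0 : (0:ℝ) < ℓ := by positivity
  have hε : 0 < ε := by rw [hεdef]; positivity
  have hℓε : (ℓ:ℝ) * ε = 1/2 := by
    rw [hεdef]; field_simp
  set d : ℕ → ℝ := fun j => if j ∈ B then 1 else ε with hddef
  have hd_pos : ∀ j, 0 < d j := by
    intro j; rw [hddef]; dsimp only
    split <;> [norm_num; exact hε]
  have hd_le1 : ∀ j, d j ≤ 1 := by
    intro j; rw [hddef]; dsimp only
    split
    · exact le_refl _
    · rw [hεdef, div_le_one (by positivity)]
      have : (2:ℝ) ≤ (ℓ:ℝ) := by exact_mod_cast hℓ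
      linarith
  set c : ℝ := (∑ j ∈ Finset.Icc 1 ℓ, ∑ t ∈ Finset.Ico 1 j, d t) / ℓ with hcdef
  set x : ℕ → ℝ := fun j => c - ∑ t ∈ Finset.Ico 1 j, d t with hxdef
  have hstep : ∀ j, 1 ≤ j → x (j+1) = x j - d j := by
    intro j hj
    show c - _ = (c - _) - d j
    rw [Finset.sum_Ico_succ_top hj]
    ring
  have hxdiff : ∀ a b, 1 ≤ a → a ≤ b → x a - x b = ∑ t ∈ Finset.Ico a b, d t := by
    intro a b ha hab
    show (c - _) - (c - _) = _
    rw [← Finset.sum_Ico_consecutive d ha hab]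
    ring
  refine ⟨x, ?_, ?_, ?_⟩
  · intro j hj _
    rw [hstep j hj]
    have := hd_pos j
    linarith
  · have hcard : (Finset.Icc 1 ℓ).card = ℓ := by simp
    show (∑ j ∈ Finset.Icc 1 ℓ, (c - ∑ t ∈ Finset.Ico 1 j, d t)) = 0
    rw [Finset.sum_sub_distrib, Finset.sum_const, hcard, nsmul_eq_mul, hcdef]
    field_simp
    simp
  · -- main inequality
    have hwv : ∀ i, 1 ≤ i → i ≤ ℓ →
        ⟪w (vec ℓ x), E ℓ i⟫
          = x (if i = N (bIdx i - 1) + 1 then N (bIdx i) else i - 1) := by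
      intro i hi1 hi2
      obtain ⟨hγ1, hγk, hγ3, hγ4⟩ := hb_spec i hi1 hi2
      rw [vec_eq_sum ℓ x, map_sum, sum_inner]
      have hterm : ∀ j ∈ Finset.Icc 1 ℓ,
          ⟪w (x j • E ℓ j), E ℓ i⟫ = x j * ⟪w (E ℓ j), E ℓ i⟫ := by
        intro j _
        rw [map_smul]
        exact real_inner_smul_left _ _ _
      rw [Finset.sum_congr rfl hterm]
      by_cases hstart : i = N (bIdx i - 1) + 1
      · rw [if_pos hstart]
        have hτ1 : 1 ≤ N (bIdx i) := by omega
        have hτ2 : N (bIdx i) ≤ ℓ := by rw [← hNk]; exact hNmono hγk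
        have hbτ : bIdx (N (bIdx i)) = bIdx i :=
          hb_eq _ _ hγ1 hγk (hNlt _ hγ1 hγk) le_rfl
        rw [Finset.sum_eq_single (N (bIdx i))]
        · rw [hwE2 _ hτ1 hτ2 (by rw [hbτ]), hbτ, ← hstart,
            E_inner hi1 hi2 hi1 hi2, if_pos rfl, mul_one]
        · intro j hj hne
          obtain ⟨hj1, hj2⟩ := Finset.mem_Icc.mp hj
          obtain ⟨hb1, hb2, hb3, hb4⟩ := hb_spec j hj1 hj2
          have hNbjℓ : N (bIdx j) ≤ ℓ := by rw [← hNk]; exact hNmono hb2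
          by_cases hje : j = N (bIdx j)
          · have hne' : N (bIdx j - 1) + 1 ≠ i := by
              intro hc
              apply hne
              have heq : N (bIdx j - 1) = N (bIdx i - 1) := by omega
              have hbij : bIdx j = bIdx i := by
                by_contra hcc
                rcases Nat.lt_or_ge (bIdx j) (bIdx i) with hlt | hge
                · have h5 : N (bIdx j) ≤ N (bIdx i - 1) := hNmono (by omega)
                  have h6 := hNlt (bIdx j) hb1 hb2
                  omega
                · have h5 : N (bIdx i) ≤ N (bIdx j - 1) := hNmono (by omega)
                  have h6 := hNlt (bIdx i) hγ1 hγk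
                  omega
              rw [hje, hbij]
            rw [hwE2 _ hj1 hj2 hje, E_inner (by omega) (by omega) hi1 hi2,
              if_neg hne', mul_zero]
          · have hne' : j + 1 ≠ i := by
              intro hc
              have hj' : j = N (bIdx i - 1) := by omega
              have hii : 1 ≤ bIdx i - 1 := by
                by_contra hcc
                have h0 : bIdx i - 1 = 0 := by omega
                rw [h0, hN0] at hj'
                omega
              have hjB : j ∈ B := by rw [hj']; exact hB_of _ hii (by omega)
              exact hje ((hBmem j hj1 hj2).mp hjB)
            rw [hwE1 _ hj1 hj2 hje, E_inner (by omega) (by omega) hi1 hi2,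
              if_neg hne', mul_zero]
        · intro hnotmem
          exact absurd (Finset.mem_Icc.mpr ⟨hτ1, hτ2⟩) hnotmem
      · rw [if_neg hstart]
        have hi1' : 1 ≤ i - 1 := by omega
        have hbτ : bIdx (i-1) = bIdx i := hb_eq _ _ hγ1 hγk (by omega) (by omega)
        rw [Finset.sum_eq_single (i-1)]
        · rw [hwE1 _ hi1' (by omega) (by rw [hbτ]; omega)]
          have hplus : i - 1 + 1 = i := by omega
          rw [hplus, E_inner hi1 hi2 hi1 hi2, if_pos rfl, mul_one]
        · intro j hj hne
          obtain ⟨hj1, hj2⟩ := Finset.mem_Icc.mp hj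
          obtain ⟨hb1, hb2, hb3, hb4⟩ := hb_spec j hj1 hj2
          have hNbjℓ : N (bIdx j) ≤ ℓ := by rw [← hNk]; exact hNmono hb2
          by_cases hje : j = N (bIdx j)
          · have hne' : N (bIdx j - 1) + 1 ≠ i := by
              intro hc
              apply hstart
              have h5 := hNlt (bIdx j) hb1 hb2
              have hbij : bIdx i = bIdx j := hb_eq i (bIdx j) hb1 hb2 (by omega) (by omega)
              rw [hbij]
              omega
            rw [hwE2 _ hj1 hj2 hje, E_inner (by omega) (by omega) hi1 hi2,
              if_neg hne', mul_zero]
          · have hne' : j + 1 ≠ i := fun hc => hne (by omega)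
            rw [hwE1 _ hj1 hj2 hje, E_inner (by omega) (by omega) hi1 hi2,
              if_neg hne', mul_zero]
        · intro hnotmem
          exact absurd (Finset.mem_Icc.mpr ⟨hi1', by omega⟩) hnotmem
    intro i hi1 hip
    have hi2 : i ≤ ℓ := by omega
    have hip1 : 1 ≤ i + 1 := by omega
    obtain ⟨hγ1, hγk, hγ3, hγ4⟩ := hb_spec i hi1 hi2
    have hNγℓ : N (bIdx i) ≤ ℓ := by rw [← hNk]; exact hNmono hγk
    rw [inner_sub_right, inner_sub_left, inner_sub_left, real_inner_smul_left,
      real_inner_smul_left, inner_vec_E_s6 x hi1 hi2, inner_vec_E_s6 x hip1 hip,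
      hwv i hi1 hi2, hwv (i+1) hip1 hip]
    by_cases hiB : i ∈ B
    · -- i is a block end
      have hiN : i = N (bIdx i) := (hBmem i hi1 hi2).mp hiB
      have hdi1 : d i = 1 := by rw [hddef]; simp [hiB]
      have hxd : x i - x (i+1) = 1 := by
        have := hstep i hi1
        rw [hdi1] at this
        linarith
      have hqx : q * x i - q * x (i+1) = q := by rw [← mul_sub, hxd, mul_one]
      have hγk' : bIdx i < k := by
        by_contra hc
        have hik : bIdx i = k := by omega
        rw [hik, hNk] at hiN
        omega
      have hsucc1 : N (bIdx i + 1 - 1) = N (bIdx i) := by norm_num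
      have hlt2 := hNlt (bIdx i + 1) (by omega) (by omega)
      rw [hsucc1] at hlt2
      have hb' : bIdx (i+1) = bIdx i + 1 :=
        hb_eq _ _ (by omega) (by omega) (by rw [hsucc1]; omega) (by omega)
      have hcond1 : i + 1 = N (bIdx (i+1) - 1) + 1 := by rw [hb']; rw [hsucc1]; omega
      rw [if_pos hcond1, hb']
      have hNγ1ℓ : N (bIdx i + 1) ≤ ℓ := by rw [← hNk]; exact hNmono (by omega)
      have hsum_le : ∀ a, N (bIdx i - 1) < a → a ≤ i →
          ∑ t ∈ Finset.Ico a (N (bIdx i + 1)), d t ≤ 1/2 + 1 := by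
        intro a ha1 ha2
        have hpt : ∀ t ∈ Finset.Ico a (N (bIdx i + 1)),
            d t ≤ ε + (if t = i then 1 else 0) := by
          intro t ht
          obtain ⟨ht1, ht2⟩ := Finset.mem_Ico.mp ht
          by_cases hti : t = i
          · rw [if_pos hti]
            have := hd_le1 t
            linarith
          · rw [if_neg hti]
            have htB : t ∉ B := by
              rcases Nat.lt_or_ge t (N (bIdx i)) with hlt | hge
              · exact hnotB t (bIdx i) hγ1 hγk (by omega) hlt
              · exact hnotB t (bIdx i + 1) (by omega) (by omega)
                  (by rw [hsucc1]; omega) (by omega)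
            have hdt : d t = ε := by rw [hddef]; simp [htB]
            rw [hdt]
            simp
        calc ∑ t ∈ Finset.Ico a (N (bIdx i + 1)), d t
            ≤ ∑ t ∈ Finset.Ico a (N (bIdx i + 1)), (ε + if t = i then 1 else 0) :=
              Finset.sum_le_sum hpt
          _ = ((N (bIdx i + 1) - a : ℕ) : ℝ) * ε
              + ∑ t ∈ Finset.Ico a (N (bIdx i + 1)), (if t = i then (1:ℝ) else 0) := by
              rw [Finset.sum_add_distrib, Finset.sum_const, Nat.card_Ico, nsmul_eq_mul]
          _ ≤ ((N (bIdx i + 1) - a : ℕ) : ℝ) * ε + 1 := by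
              rw [Finset.sum_ite_eq' (Finset.Ico a (N (bIdx i + 1))) i (fun _ => (1:ℝ))]
              split <;> norm_num
          _ ≤ 1/2 + 1 := by
              have hcast : ((N (bIdx i + 1) - a : ℕ) : ℝ) ≤ (ℓ : ℝ) :=
                Nat.cast_le.mpr (by omega)
              have h1 : ((N (bIdx i + 1) - a : ℕ) : ℝ) * ε ≤ (ℓ:ℝ) * ε :=
                mul_le_mul_of_nonneg_right hcast hε.le
              rw [hℓε] at h1
              linarith
      by_cases hstart : i = N (bIdx i - 1) + 1
      · rw [if_pos hstart, ← hiN]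
        have hd1 := hxdiff i (N (bIdx i + 1)) hi1 (by omega)
        have hble := hsum_le i (by omega) le_rfl
        linarith
      · rw [if_neg hstart]
        have hi1' : 1 ≤ i - 1 := by omega
        have hd1 := hxdiff (i-1) (N (bIdx i + 1)) hi1' (by omega)
        have hble := hsum_le (i-1) (by omega) (by omega)
        linarith
    · -- i is not a block end
      have hiN : i ≠ N (bIdx i) := fun hc => hiB ((hBmem i hi1 hi2).mpr hc)
      have hdiε : d i = ε := by rw [hddef]; simp [hiB]
      have hxd : x i - x (i+1) = ε := by
        have := hstep i hi1
        rw [hdiε] at this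
        linarith
      have hqx : q * x i - q * x (i+1) = q * ε := by rw [← mul_sub, hxd]
      have hb' : bIdx (i+1) = bIdx i := hb_eq _ _ hγ1 hγk (by omega) (by omega)
      have hcond1 : ¬(i + 1 = N (bIdx (i+1) - 1) + 1) := by rw [hb']; omega
      rw [if_neg hcond1]
      have hii : i + 1 - 1 = i := by omega
      rw [hii]
      have hqε : 2 * ε ≤ q * ε := by nlinarith
      by_cases hstart : i = N (bIdx i - 1) + 1
      · rw [if_pos hstart]
        have hmon : x (N (bIdx i)) ≤ x i := by
          have hdd := hxdiff i (N (bIdx i)) hi1 hγ4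
          have hpos : 0 ≤ ∑ t ∈ Finset.Ico i (N (bIdx i)), d t :=
            Finset.sum_nonneg (fun t _ => (hd_pos t).le)
          linarith
        linarith
      · rw [if_neg hstart]
        have hi1' : 1 ≤ i - 1 := by omega
        have hdiff : x (i-1) - x i = d (i-1) := by
          have h := hstep (i-1) hi1'
          have hplus : i - 1 + 1 = i := by omega
          rw [hplus] at h
          linarith
        have hd2 : d (i-1) = ε := by
          have hnB : (i-1) ∉ B := hnotB (i-1) (bIdx i) hγ1 hγk (by omega) (by omega)
          rw [hddef]; simp [hnB]
        rw [hd2] at hdiff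
        linarith
end
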